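/- A continuous surjection f: X → Y of digital images is shy if and only if for every connected subset Y' of Y, the preimage f⁻¹(Y') is connected in X. -/

import Mathlib

/-- A subset `A` is connected under adjacency `κ` if any two of its points are
joined by a path within `A` whose consecutive points are `κ`-adjacent. -/
def DConn {X : Type*} (κ : X → X → Prop) (A : Set X) : Prop :=
  ∀ a ∈ A, ∀ b ∈ A,
    Relation.ReflTransGen (fun u v => κ u v ∧ u ∈ A ∧ v ∈ A) a b

/-- `f` is digitally continuous if images of connected sets are connected. -/
def DCont {X Y : Type*} (κ : X → X → Prop) (lam : Y → Y → Prop) (f : X → Y) : Prop :=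
  ∀ A : Set X, DConn κ A → DConn lam (f '' A)

/-- `f` is shy: a continuous surjection with connected point preimages and
connected preimages of adjacent pairs. -/
def DShy {X Y : Type*} (κ : X → X → Prop) (lam : Y → Y → Prop) (f : X → Y) : Prop :=
  DCont κ lam f ∧ Function.Surjective f ∧
    (∀ y : Y, DConn κ (f ⁻¹' {y})) ∧
    ∀ y₀ y₁ : Y, lam y₀ y₁ → DConn κ (f ⁻¹' {y₀, y₁})

theorem shy_iff_preimages_of_connected_connected {X Y : Type*}
    (κ : X → X → Prop) (lam : Y → Y → Prop)
    (hκs : Symmetric κ) (hκi : Irreflexive κ)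
    (hls : Symmetric lam) (hli : Irreflexive lam)
    (f : X → Y) (hcont : DCont κ lam f) (hsurj : Function.Surjective f) :
    DShy κ lam f ↔ ∀ B : Set Y, DConn lam B → DConn κ (f ⁻¹' B) := by
  have mono : ∀ (A A' : Set X), A ⊆ A' → ∀ a b : X,
      Relation.ReflTransGen (fun u v => κ u v ∧ u ∈ A ∧ v ∈ A) a b →
      Relation.ReflTransGen (fun u v => κ u v ∧ u ∈ A' ∧ v ∈ A') a b := by
    intro A A' hAA a b h
    exact Relation.ReflTransGen.mono
      (by rintro u v ⟨h1, h2, h3⟩; exact ⟨h1, hAA h2, hAA h3⟩) a b h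
  constructor
  · rintro ⟨-, -, hpt, hpair⟩ B hB a ha b hb
    have key : ∀ y : Y, Relation.ReflTransGen
        (fun u v => lam u v ∧ u ∈ B ∧ v ∈ B) (f a) y →
        ∀ x : X, f x = y → Relation.ReflTransGen
          (fun u v => κ u v ∧ u ∈ f ⁻¹' B ∧ v ∈ f ⁻¹' B) a x := by
      intro y hy
      induction hy with
      | refl =>
        intro x hx
        have := hpt (f a) a rfl x hx
        refine mono _ _ (fun z (hz : f z = f a) => ?_) a x this
        show f z ∈ B
        rw [hz]; exact ha
      | tail hpath hstep ih =>
        rename_i y₀ y₁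
        intro x hx
        obtain ⟨w, hw⟩ := hsurj y₀
        have haw := ih w hw
        have hsub : f ⁻¹' {y₀, y₁} ⊆ f ⁻¹' B := by
          intro z hz
          rcases hz with h | h
          · exact Set.mem_preimage.mpr (h ▸ hstep.2.1)
          · exact Set.mem_preimage.mpr (h ▸ hstep.2.2)
        have := hpair y₀ y₁ hstep.1 w (Or.inl hw) x (Or.inr hx)
        exact haw.trans (mono _ _ hsub w x this)
    exact key (f b) (hB (f a) ha (f b) hb) b rfl
  · intro H
    refine ⟨hcont, hsurj, ?_, ?_⟩
    · intro y
      have : DConn lam ({y} : Set Y) := by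
        intro a ha b hb
        rw [Set.mem_singleton_iff] at ha hb
        subst ha; subst hb; exact Relation.ReflTransGen.refl
      exact H {y} this
    · intro y₀ y₁ hl
      have : DConn lam ({y₀, y₁} : Set Y) := by
        intro a ha b hb
        rcases ha with ha | ha <;> rcases hb with hb | hb <;> subst ha <;> subst hb
        · exact Relation.ReflTransGen.refl
        · exact Relation.ReflTransGen.single ⟨hl, Or.inl rfl, Or.inr rfl⟩
        · exact Relation.ReflTransGen.single ⟨hls hl, Or.inr rfl, Or.inl rfl⟩
        · exact Relation.ReflTransGen.refl
      exact H {y₀, y₁} this
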